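/- Let Q be a quiver without oriented cycles and V a representation of Q. The sequence 0 → ⊕_{a∈Q₁} V(ta) ⊗ P_{ha} → ⊕_{x∈Q₀} V(x) ⊗ P_x → V → 0, where the first map sends v ⊗ e_{ha} to V(a)(v) ⊗ e_{ha} − v ⊗ a and the second sends v ⊗ e_x to v (via the identification Hom(P_x, V) ≅ V(x)), is an exact sequence of representations (the Ringel projective resolution). -/

import Mathlib

attribute [local instance] Classical.decEq

noncomputable section
namespace Stmt12Aux

variable {K : Type*} [Field K] {Q0 : Type} [Quiver.{1} Q0]
variable (Vobj : Q0 → Type) [∀ x, AddCommGroup (Vobj x)] [∀ x, Module K (Vobj x)]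
variable (Vmap : ∀ {x y : Q0}, (x ⟶ y) → (Vobj x →ₗ[K] Vobj y))
variable (Vpath : ∀ {x y : Q0}, Quiver.Path x y → (Vobj x →ₗ[K] Vobj y))

abbrev MP (w : Q0) : Type 1 := Π₀ j : Σ x : Q0, Quiver.Path x w, Vobj j.1
abbrev MA (w : Q0) : Type 1 := Π₀ i : Σ x z : Q0, (x ⟶ z) × Quiver.Path z w, Vobj i.1

def lsP (w : Q0) (j : Σ x : Q0, Quiver.Path x w) :
    Vobj j.1 →ₗ[K] MP Vobj w :=
  DFinsupp.lsingle (M := fun j : Σ x : Q0, Quiver.Path x w => Vobj j.1) j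

def lsA (w : Q0) (i : Σ x z : Q0, (x ⟶ z) × Quiver.Path z w) :
    Vobj i.1 →ₗ[K] MA Vobj w :=
  DFinsupp.lsingle (M := fun i : Σ x z : Q0, (x ⟶ z) × Quiver.Path z w => Vobj i.1) i

def Psi {u w : Q0} (b : u ⟶ w) : MP Vobj u →ₗ[K] MP Vobj w :=
  DFinsupp.lsum ℕ fun j : Σ x : Q0, Quiver.Path x u =>
    lsP Vobj w ⟨j.1, j.2.cons b⟩

def Phi {u w : Q0} (b : u ⟶ w) : MA Vobj u →ₗ[K] MA Vobj w :=
  DFinsupp.lsum ℕ fun i : Σ x z : Q0, (x ⟶ z) × Quiver.Path z u =>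
    lsA Vobj w ⟨i.1, i.2.1, i.2.2.1, i.2.2.2.cons b⟩

def D (w : Q0) : MA Vobj w →ₗ[K] MP Vobj w :=
  DFinsupp.lsum ℕ fun i : Σ x z : Q0, (x ⟶ z) × Quiver.Path z w =>
    lsP Vobj w ⟨i.2.1, i.2.2.2⟩ ∘ₗ Vmap i.2.2.1
      - lsP Vobj w ⟨i.1, (Quiver.Hom.toPath i.2.2.1).comp i.2.2.2⟩

def E (w : Q0) : MP Vobj w →ₗ[K] Vobj w :=
  DFinsupp.lsum ℕ fun j : Σ x : Q0, Quiver.Path x w => Vpath j.2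

def U {x : Q0} : {w : Q0} → Quiver.Path x w → (Vobj x →ₗ[K] MA Vobj w)
  | _, Quiver.Path.nil => 0
  | _, Quiver.Path.cons (b := u) (c := w) p f =>
      Phi Vobj f ∘ₗ U p
        + lsA Vobj w ⟨u, w, f, Quiver.Path.nil⟩ ∘ₗ Vpath p

end Stmt12Aux

namespace Stmt12Aux2
open Stmt12Aux

variable {K : Type*} [Field K] {Q0 : Type} [Quiver.{1} Q0]
variable {Vobj : Q0 → Type} [∀ x, AddCommGroup (Vobj x)] [∀ x, Module K (Vobj x)]
variable {Vmap : ∀ {x y : Q0}, (x ⟶ y) → (Vobj x →ₗ[K] Vobj y)}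
variable {Vpath : ∀ {x y : Q0}, Quiver.Path x y → (Vobj x →ₗ[K] Vobj y)}
variable (hnil : ∀ x : Q0, Vpath (Quiver.Path.nil : Quiver.Path x x) = LinearMap.id)
variable (hcons : ∀ {x y z : Q0} (p : Quiver.Path x y) (a : y ⟶ z),
      Vpath (p.cons a) = (Vmap a).comp (Vpath p))

section
include hnil hcons

theorem vpath_comp : ∀ {x z w : Q0} (q : Quiver.Path x z) (p : Quiver.Path z w),
    Vpath (q.comp p) = (Vpath p) ∘ₗ (Vpath q) := by
  intro x z w q p
  induction p with
  | nil => rw [Quiver.Path.comp_nil, hnil]; rfl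
  | cons p f ih => rw [Quiver.Path.comp_cons, hcons, hcons, ih]; rfl

theorem vpath_toPath_comp {x z w : Q0} (a : x ⟶ z) (p : Quiver.Path z w) :
    Vpath ((Quiver.Hom.toPath a).comp p) = (Vpath p) ∘ₗ (Vmap a) := by
  rw [vpath_comp hnil hcons]
  have : (Vpath (Quiver.Hom.toPath a) : Vobj x →ₗ[K] Vobj z) = Vmap a := by
    show Vpath (Quiver.Path.nil.cons a) = _
    rw [hcons, hnil]; rfl
  rw [this]

end

theorem Psi_lsP {u w : Q0} (b : u ⟶ w) (j : Σ x : Q0, Quiver.Path x u) :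
    Psi (K := K) Vobj b ∘ₗ lsP Vobj u j = lsP Vobj w ⟨j.1, j.2.cons b⟩ := by
  apply LinearMap.ext; intro v
  simp [Psi, lsP, DFinsupp.lsum_single]

theorem Phi_lsA {u w : Q0} (b : u ⟶ w) (i : Σ x z : Q0, (x ⟶ z) × Quiver.Path z u) :
    Phi (K := K) Vobj b ∘ₗ lsA Vobj u i = lsA Vobj w ⟨i.1, i.2.1, i.2.2.1, i.2.2.2.cons b⟩ := by
  apply LinearMap.ext; intro v
  simp [Phi, lsA, DFinsupp.lsum_single]

theorem D_lsA {w : Q0} (i : Σ x z : Q0, (x ⟶ z) × Quiver.Path z w) :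
    D (K := K) Vobj Vmap w ∘ₗ lsA Vobj w i =
      lsP Vobj w ⟨i.2.1, i.2.2.2⟩ ∘ₗ Vmap i.2.2.1
        - lsP Vobj w ⟨i.1, (Quiver.Hom.toPath i.2.2.1).comp i.2.2.2⟩ := by
  apply LinearMap.ext; intro v
  simp [D, lsA, DFinsupp.lsum_single]

theorem E_lsP {w : Q0} (j : Σ x : Q0, Quiver.Path x w) :
    E (K := K) Vobj Vpath w ∘ₗ lsP Vobj w j = Vpath j.2 := by
  apply LinearMap.ext; intro v
  simp [E, lsP, DFinsupp.lsum_single]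

theorem D_Phi {u w : Q0} (b : u ⟶ w) :
    D (K := K) Vobj Vmap w ∘ₗ Phi Vobj b = Psi Vobj b ∘ₗ D Vobj Vmap u := by
  apply DFinsupp.lhom_ext; intro i v
  obtain ⟨x, z, a, p⟩ := i
  show (D Vobj Vmap w ∘ₗ (Phi Vobj b ∘ₗ lsA Vobj u ⟨x,z,a,p⟩)) v
    = (Psi Vobj b ∘ₗ (D Vobj Vmap u ∘ₗ lsA Vobj u ⟨x,z,a,p⟩)) v
  rw [Phi_lsA, D_lsA, D_lsA]
  simp only [LinearMap.comp_sub, LinearMap.sub_apply, LinearMap.comp_apply]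
  have h1 := LinearMap.congr_fun (Psi_lsP (Vobj := Vobj) (K := K) b ⟨z, p⟩) ((Vmap a) v)
  have h2 := LinearMap.congr_fun (Psi_lsP (Vobj := Vobj) (K := K) b ⟨x, a.toPath.comp p⟩) v
  simp only [LinearMap.comp_apply] at h1 h2
  rw [h1, h2]
  simp [Quiver.Path.comp_cons]

section
include hnil hcons

theorem U_comp {x z : Q0} (a : x ⟶ z) : ∀ {w : Q0} (p : Quiver.Path z w),
    U Vobj Vpath ((Quiver.Hom.toPath a).comp p)
      = lsA Vobj w ⟨x, z, a, p⟩ + U Vobj Vpath p ∘ₗ Vmap a := by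
  intro w p
  induction p with
  | nil =>
    rw [Quiver.Path.comp_nil]
    show U Vobj Vpath (Quiver.Path.nil.cons a) = _
    simp [U, hnil]
  | cons p f ih =>
    rw [Quiver.Path.comp_cons]
    show Phi Vobj f ∘ₗ U Vobj Vpath ((Quiver.Hom.toPath a).comp p)
        + lsA Vobj _ ⟨_, _, f, Quiver.Path.nil⟩ ∘ₗ Vpath ((Quiver.Hom.toPath a).comp p)
      = _ + (Phi Vobj f ∘ₗ U Vobj Vpath p
        + lsA Vobj _ ⟨_, _, f, Quiver.Path.nil⟩ ∘ₗ Vpath p) ∘ₗ Vmap a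
    rw [ih, vpath_toPath_comp hnil hcons]
    simp only [LinearMap.comp_add, LinearMap.add_comp, ← LinearMap.comp_assoc]
    rw [Phi_lsA]
    abel

theorem D_U {x w : Q0} (p : Quiver.Path x w) :
    D (K := K) Vobj Vmap w ∘ₗ U Vobj Vpath p
      = lsP Vobj w ⟨w, Quiver.Path.nil⟩ ∘ₗ Vpath p - lsP Vobj w ⟨x, p⟩ := by
  induction p with
  | nil =>
    show D Vobj Vmap x ∘ₗ 0 = _
    rw [LinearMap.comp_zero, hnil]
    simp
  | cons p f ih =>
    rename_i u w'
    show D Vobj Vmap w' ∘ₗ (Phi Vobj f ∘ₗ U Vobj Vpath p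
        + lsA Vobj w' ⟨u, w', f, Quiver.Path.nil⟩ ∘ₗ Vpath p) = _
    simp only [LinearMap.comp_add, ← LinearMap.comp_assoc]
    rw [D_Phi, D_lsA]
    simp only [LinearMap.comp_assoc]
    rw [ih]
    simp only [LinearMap.comp_sub, LinearMap.sub_comp, ← LinearMap.comp_assoc]
    rw [Psi_lsP, Psi_lsP, hcons p f]
    simp only [Quiver.Path.comp_nil, Quiver.Hom.toPath, ← LinearMap.comp_assoc]
    abel

theorem E_D (w : Q0) :
    E (K := K) Vobj Vpath w ∘ₗ D Vobj Vmap w = 0 := by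
  apply DFinsupp.lhom_ext; intro i v
  obtain ⟨x, z, a, p⟩ := i
  show (E Vobj Vpath w ∘ₗ (D Vobj Vmap w ∘ₗ lsA Vobj w ⟨x, z, a, p⟩)) v
    = (0 : MA Vobj w →ₗ[K] Vobj w) (DFinsupp.single ⟨x, z, a, p⟩ v)
  rw [D_lsA]
  simp only [LinearMap.comp_sub, ← LinearMap.comp_assoc]
  rw [E_lsP, E_lsP]
  dsimp only
  rw [vpath_toPath_comp hnil hcons]
  simp

end

end Stmt12Aux2


theorem single_indep {ι : Type*} {M : ι → Type*} [∀ i, Zero (M i)]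
    {h1 h2 : DecidableEq ι} {i : ι} {x : M i} :
    @DFinsupp.single ι M _ h1 i x = @DFinsupp.single ι M _ h2 i x := by
  rw [Subsingleton.elim h1 h2]


set_option linter.unusedVariables false in
open Stmt12Aux Stmt12Aux2 in

/-- Ringel's projective resolution.  Let Q be a quiver without oriented
cycles and V a representation (with Vpath the evaluation of V on paths).  For each vertex
y, the sequence
0 → ⊕_{a ∈ Q₁} V(ta) ⊗ P_{ha}(y) → ⊕_{x ∈ Q₀} V(x) ⊗ P_x(y) → V(y) → 0,
where P_x(y) is the free module on paths from x to y, the first map sends v ⊗ p (p a path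
from ha to y) to V(a)(v) ⊗ p − v ⊗ (a·p), and the second sends v ⊗ p to V(p)(v), is
exact. -/
theorem stmt12 {K : Type*} [Field K] {Q0 : Type} [Quiver.{1} Q0]
    (Vobj : Q0 → Type) [∀ x, AddCommGroup (Vobj x)] [∀ x, Module K (Vobj x)]
    (Vmap : ∀ {x y : Q0}, (x ⟶ y) → (Vobj x →ₗ[K] Vobj y))
    (Vpath : ∀ {x y : Q0}, Quiver.Path x y → (Vobj x →ₗ[K] Vobj y))
    (hnil : ∀ x : Q0, Vpath (Quiver.Path.nil : Quiver.Path x x) = LinearMap.id)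
    (hcons : ∀ {x y z : Q0} (p : Quiver.Path x y) (a : y ⟶ z),
      Vpath (p.cons a) = (Vmap a).comp (Vpath p))
    (hacyc : ∀ (x : Q0) (p : Quiver.Path x x), p = Quiver.Path.nil)
    (y : Q0)
    [DecidableEq (Σ x : Q0, Quiver.Path x y)]
    [DecidableEq (Σ x z : Q0, (x ⟶ z) × Quiver.Path z y)]
    (d1 : DFinsupp (fun i : Σ x z : Q0, (x ⟶ z) × Quiver.Path z y => Vobj i.1) →ₗ[K]
      DFinsupp (fun j : Σ x : Q0, Quiver.Path x y => Vobj j.1))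
    (d2 : DFinsupp (fun j : Σ x : Q0, Quiver.Path x y => Vobj j.1) →ₗ[K] Vobj y)
    (hd2 : ∀ (x : Q0) (p : Quiver.Path x y) (v : Vobj x),
      d2 (DFinsupp.single (⟨x, p⟩ : Σ x : Q0, Quiver.Path x y) v) = Vpath p v)
    (hd1 : ∀ (x z : Q0) (a : x ⟶ z) (p : Quiver.Path z y) (v : Vobj x),
      d1 (DFinsupp.single (⟨x, z, a, p⟩ : Σ x z : Q0, (x ⟶ z) × Quiver.Path z y) v)
        = DFinsupp.single (⟨z, p⟩ : Σ x : Q0, Quiver.Path x y) (Vmap a v)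
          - DFinsupp.single
              (⟨x, (Quiver.Hom.toPath a).comp p⟩ : Σ x : Q0, Quiver.Path x y) v) :
    Function.Injective d1 ∧ LinearMap.range d1 = LinearMap.ker d2 ∧
      Function.Surjective d2 := by
  have hd1' : d1 = D Vobj Vmap y := by
    apply DFinsupp.lhom_ext
    rintro ⟨x, z, a, p⟩ v
    rw [hd1]
    have e := LinearMap.congr_fun
      (D_lsA (K := K) (Vobj := Vobj) (Vmap := Vmap) (w := y) ⟨x, z, a, p⟩) v
    simp only [LinearMap.comp_apply, LinearMap.sub_apply, lsP, lsA,
      DFinsupp.lsingle_apply] at e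
    convert e.symm using 2 <;> exact single_indep
  have hd2' : d2 = E Vobj Vpath y := by
    apply DFinsupp.lhom_ext
    rintro ⟨x, p⟩ v
    rw [hd2]
    have e := LinearMap.congr_fun
      (E_lsP (K := K) (Vobj := Vobj) (Vpath := Vpath) (w := y) ⟨x, p⟩) v
    simp only [LinearMap.comp_apply, lsP, DFinsupp.lsingle_apply] at e
    convert e.symm using 2 <;> exact single_indep
  subst hd1' hd2'
  set t : MP Vobj y →ₗ[K] MA Vobj y :=
    DFinsupp.lsum ℕ (fun j : Σ x : Q0, Quiver.Path x y => U Vobj Vpath j.2) with ht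
  have tsingle : ∀ (j : Σ x : Q0, Quiver.Path x y) (v : Vobj j.1),
      t (DFinsupp.single j v) = U Vobj Vpath j.2 v := by
    intro j v
    rw [ht]
    exact DFinsupp.lsum_single _ _ _ _
  have htD : ∀ ξ, t (D Vobj Vmap y ξ) = -ξ := by
    have key : t ∘ₗ D Vobj Vmap y = -LinearMap.id := by
      apply DFinsupp.lhom_ext
      rintro ⟨x, z, a, p⟩ v
      show t (D Vobj Vmap y (DFinsupp.single ⟨x, z, a, p⟩ v))
        = -(DFinsupp.single (⟨x, z, a, p⟩ : Σ x z : Q0, (x ⟶ z) × Quiver.Path z y) v)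
      rw [hd1 x z a p v, map_sub, tsingle, tsingle]
      dsimp only
      rw [U_comp hnil hcons a p]
      simp only [LinearMap.add_apply, LinearMap.comp_apply]
      have hs : lsA (K := K) Vobj y ⟨x, z, a, p⟩ v
          = DFinsupp.single (⟨x, z, a, p⟩ : Σ x z : Q0, (x ⟶ z) × Quiver.Path z y) v := by
        simp only [lsA, DFinsupp.lsingle_apply]
        exact single_indep
      rw [hs]
      abel
    intro ξ
    have := LinearMap.congr_fun key ξ
    simpa using this
  have hDt : ∀ ξ, D Vobj Vmap y (t ξ) =
      lsP (K := K) Vobj y ⟨y, Quiver.Path.nil⟩ (E Vobj Vpath y ξ) - ξ := by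
    have key : D Vobj Vmap y ∘ₗ t
        = lsP (K := K) Vobj y ⟨y, Quiver.Path.nil⟩ ∘ₗ E Vobj Vpath y - LinearMap.id := by
      apply DFinsupp.lhom_ext
      rintro ⟨x, p⟩ v
      show D Vobj Vmap y (t (DFinsupp.single ⟨x, p⟩ v)) = _
      rw [tsingle]
      have e := LinearMap.congr_fun (D_U (K := K) (Vobj := Vobj) (Vmap := Vmap)
        (Vpath := Vpath) hnil hcons p) v
      simp only [LinearMap.comp_apply, LinearMap.sub_apply] at e
      rw [e]
      simp only [LinearMap.sub_apply, LinearMap.comp_apply, LinearMap.id_apply]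
      rw [hd2 x p v]
      have hs2 : lsP (K := K) Vobj y ⟨x, p⟩ v
          = DFinsupp.single (⟨x, p⟩ : Σ x : Q0, Quiver.Path x y) v := by
        simp only [lsP, DFinsupp.lsingle_apply]
        exact single_indep
      rw [hs2]
    intro ξ
    have := LinearMap.congr_fun key ξ
    simpa using this
  refine ⟨?_, le_antisymm ?_ ?_, ?_⟩
  · intro ξ ξ' h
    have h2 := congrArg t h
    rw [htD, htD] at h2
    exact neg_injective h2
  · rintro ζ ⟨ξ, rfl⟩
    have := LinearMap.congr_fun
      (E_D (K := K) (Vobj := Vobj) (Vmap := Vmap) (Vpath := Vpath) hnil hcons y) ξ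
    simpa using this
  · intro ξ hξ
    have hξ' : E Vobj Vpath y ξ = 0 := hξ
    refine ⟨-t ξ, ?_⟩
    rw [map_neg, hDt, hξ', map_zero]
    simp
  · intro v
    refine ⟨lsP (K := K) Vobj y ⟨y, Quiver.Path.nil⟩ v, ?_⟩
    have := LinearMap.congr_fun
      (E_lsP (K := K) (Vobj := Vobj) (Vpath := Vpath) (w := y) ⟨y, Quiver.Path.nil⟩) v
    simp only [LinearMap.comp_apply] at this
    rw [this, hnil]
    rfl
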